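/- For u ∈ H^{s+1}(ℝ,ℂ²), 0 ≤ j ≤ s, and δ > 0, the iterated difference quotient D_δ^j u := (δ⁻¹(e^{δ∂_x}−1))^j u satisfies δ Σ_{x ∈ δℤ} ‖D_δ^j u(x)‖²_{ℂ²} ≤ ‖∂_x^j u‖²_{L²} + 2δ ‖∂_x^j u‖_{L²} ‖∂_x^{j+1} u‖_{L²}. -/

import Mathlib

open MeasureTheory Real

noncomputable section

abbrev C2 := EuclideanSpace ℂ (Fin 2)

/-- The `L²` norm `‖u‖_{L²} = (∫ ‖u(x)‖² dx)^{1/2}`. -/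
def L2Norm (u : ℝ → C2) : ℝ := Real.sqrt (∫ x : ℝ, ‖u x‖ ^ 2)

/-- Membership in the Sobolev space `H^s(ℝ, ℂ²)`. -/
def InH (s : ℕ) (u : ℝ → C2) : Prop :=
  ContDiff ℝ s u ∧ ∀ j ≤ s, Integrable (fun x => ‖iteratedDeriv j u x‖ ^ 2)

/-- Forward difference quotient `D_δ u = δ⁻¹ (u(·+δ) - u)`. -/
def Dquot (δ : ℝ) (u : ℝ → C2) : ℝ → C2 := fun x => δ⁻¹ • (u (x + δ) - u x)

lemma contDiff_Dquot {n : WithTop ℕ∞} {u : ℝ → C2} (hu : ContDiff ℝ n u) (δ : ℝ) :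
    ContDiff ℝ n (Dquot δ u) :=
  ((hu.comp (contDiff_id.add contDiff_const)).sub hu).const_smul δ⁻¹

lemma contDiff_Dquot_iter {n : WithTop ℕ∞} {u : ℝ → C2} (hu : ContDiff ℝ n u) (δ : ℝ) (j : ℕ) :
    ContDiff ℝ n ((Dquot δ)^[j] u) := by
  induction j with
  | zero => exact hu
  | succ k ih => rw [Function.iterate_succ_apply']; exact contDiff_Dquot ih δ

lemma deriv_Dquot {u : ℝ → C2} (hu : Differentiable ℝ u) (δ : ℝ) :
    deriv (Dquot δ u) = Dquot δ (deriv u) := by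
  funext x
  have h1 : DifferentiableAt ℝ (fun y => u (y + δ)) x :=
    (hu (x + δ)).comp x ((differentiable_id.add_const δ) x)
  unfold Dquot
  rw [deriv_fun_const_smul (f := fun y => u (y + δ) - u y) _ (h1.sub (hu x)), deriv_fun_sub h1 (hu x), deriv_comp_add_const]

lemma deriv_Dquot_iter {u : ℝ → C2} (hu : ContDiff ℝ 1 u) (δ : ℝ) (j : ℕ) :
    deriv ((Dquot δ)^[j] u) = (Dquot δ)^[j] (deriv u) := by
  induction j with
  | zero => rfl
  | succ k ih =>
      rw [Function.iterate_succ_apply', Function.iterate_succ_apply', ← ih,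
        deriv_Dquot ((contDiff_Dquot_iter hu δ k).differentiable one_ne_zero)]

lemma integrable_sq_Dquot {δ : ℝ} {u : ℝ → C2} (hc : Continuous u)
    (h : Integrable (fun x => ‖u x‖ ^ 2)) :
    Integrable (fun x => ‖Dquot δ u x‖ ^ 2) := by
  have hshift : Integrable (fun x => ‖u (x + δ)‖ ^ 2) := h.comp_add_right δ
  have hg : Integrable (fun x => 2 * |δ⁻¹| ^ 2 * (‖u (x + δ)‖ ^ 2 + ‖u x‖ ^ 2)) :=
    (hshift.add h).const_mul _
  refine hg.mono' ?_ ?_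
  · exact (((hc.comp (continuous_id.add continuous_const)).sub hc).const_smul δ⁻¹).norm.pow 2
      |>.aestronglyMeasurable
  · refine Filter.Eventually.of_forall fun x => ?_
    have h1 : ‖Dquot δ u x‖ ≤ |δ⁻¹| * (‖u (x + δ)‖ + ‖u x‖) := by
      rw [Dquot, norm_smul, Real.norm_eq_abs]
      exact mul_le_mul_of_nonneg_left (norm_sub_le _ _) (abs_nonneg _)
    have h2 : ‖Dquot δ u x‖ ^ 2 ≤ (|δ⁻¹| * (‖u (x + δ)‖ + ‖u x‖)) ^ 2 :=
      pow_le_pow_left₀ (norm_nonneg _) h1 2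
    rw [Real.norm_eq_abs, abs_of_nonneg (by positivity)]
    refine h2.trans ?_
    rw [mul_pow]
    ring_nf
    nlinarith [mul_nonneg (sq_nonneg |δ⁻¹|) (sq_nonneg (‖u (δ + x)‖ - ‖u x‖))]

local notation "⟪" x ", " y "⟫" => @inner ℂ _ _ x y

lemma hasDerivAt_normSq {v : ℝ → C2} (hv : Differentiable ℝ v) (x : ℝ) :
    HasDerivAt (fun t => ‖v t‖ ^ 2) (2 * RCLike.re ⟪v x, deriv v x⟫) x := by
  have h1 : HasDerivAt (fun t => ⟪v t, v t⟫)
      (⟪v x, deriv v x⟫ + ⟪deriv v x, v x⟫) x :=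
    HasDerivAt.inner ℂ (hv x).hasDerivAt (hv x).hasDerivAt
  have h2 := (Complex.reCLM.hasFDerivAt.comp x h1.hasFDerivAt).hasDerivAt
  have h3 : (fun t => Complex.reCLM ⟪v t, v t⟫) = fun t => ‖v t‖ ^ 2 := by
    funext t
    simpa using inner_self_eq_norm_sq (𝕜 := ℂ) (v t)
  rw [Function.comp_def, h3] at h2
  refine h2.congr_deriv (Eq.symm ?_)
  have := inner_conj_symm (𝕜 := ℂ) (v x) (deriv v x)
  simp only [ContinuousLinearMap.coe_comp', Function.comp_apply, Complex.reCLM_apply,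
    ContinuousLinearMap.toSpanSingleton_apply, one_smul]
  rw [Complex.add_re, ← this, Complex.conj_re]
  simp [RCLike.re]
  rw [← this, Complex.conj_re]
  ring

lemma cs_real {α} [MeasurableSpace α] {μ : Measure α} {f g : α → ℝ}
    (hf : AEStronglyMeasurable f μ) (hg : AEStronglyMeasurable g μ)
    (hf0 : ∀ x, 0 ≤ f x) (hg0 : ∀ x, 0 ≤ g x)
    (hf2 : Integrable (fun x => f x ^ 2) μ) (hg2 : Integrable (fun x => g x ^ 2) μ) :
    ∫ x, f x * g x ∂μ ≤ Real.sqrt (∫ x, f x ^ 2 ∂μ) * Real.sqrt (∫ x, g x ^ 2 ∂μ) := by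
  have hpq : Real.HolderConjugate 2 2 := Real.HolderConjugate.two_two
  have h2 : ENNReal.ofReal (2:ℝ) = 2 := by norm_num
  have hfm : MemLp f (ENNReal.ofReal (2:ℝ)) μ := by
    rw [h2]; exact (memLp_two_iff_integrable_sq hf).mpr hf2
  have hgm : MemLp g (ENNReal.ofReal (2:ℝ)) μ := by
    rw [h2]; exact (memLp_two_iff_integrable_sq hg).mpr hg2
  have := integral_mul_le_Lp_mul_Lq_of_nonneg hpq
    (Filter.Eventually.of_forall hf0) (Filter.Eventually.of_forall hg0) hfm hgm
  calc ∫ x, f x * g x ∂μ ≤ (∫ x, f x ^ (2:ℝ) ∂μ) ^ (1/2:ℝ) * (∫ x, g x ^ (2:ℝ) ∂μ) ^ (1/2:ℝ) := this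
    _ = Real.sqrt (∫ x, f x ^ 2 ∂μ) * Real.sqrt (∫ x, g x ^ 2 ∂μ) := by
        simp_rw [← Real.rpow_natCast (n := 2), ← Real.sqrt_eq_rpow]
        norm_num

lemma integral_sq_Dquot_le {δ : ℝ} (hδ : 0 < δ) {v : ℝ → C2} (hv : ContDiff ℝ 1 v)
    (h1 : Integrable (fun x => ‖deriv v x‖ ^ 2)) :
    ∫ x : ℝ, ‖Dquot δ v x‖ ^ 2 ≤ ∫ x : ℝ, ‖deriv v x‖ ^ 2 := by
  have hvd : Differentiable ℝ v := hv.differentiable one_ne_zero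
  have hv' : Continuous (deriv v) := (contDiff_one_iff_deriv.mp hv).2
  set h : ℝ → ℝ := fun t => ‖deriv v t‖ ^ 2 with hh_def
  have hhc : Continuous h := hv'.norm.pow 2
  have hDqc : Continuous (fun x => ‖Dquot δ v x‖ ^ 2) := by
    have : Continuous v := hv.continuous
    exact (((((this.comp (continuous_id.add continuous_const)).sub this).const_smul
      δ⁻¹).norm).pow 2)
  -- pointwise bound
  have key : ∀ x : ℝ, ‖Dquot δ v x‖ ^ 2 ≤ δ⁻¹ * ∫ s in Set.Ioc 0 δ, h (x + s) := by
    intro x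
    have hle : x ≤ x + δ := by linarith
    have ftc : ∫ t in x..(x+δ), deriv v t = v (x+δ) - v x :=
      intervalIntegral.integral_deriv_eq_sub (fun t _ => hvd t)
        (hv'.intervalIntegrable x (x+δ))
    have hDq : ‖Dquot δ v x‖ ≤ δ⁻¹ * ∫ t in x..(x+δ), ‖deriv v t‖ := by
      rw [Dquot, norm_smul, Real.norm_eq_abs, abs_of_pos (inv_pos.mpr hδ), ← ftc]
      exact mul_le_mul_of_nonneg_left
        (intervalIntegral.norm_integral_le_integral_norm hle) (inv_pos.mpr hδ).le
    set μx := volume.restrict (Set.Ioc x (x+δ)) with hμx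
    have hμx_fin : μx Set.univ = ENNReal.ofReal δ := by
      rw [hμx, Measure.restrict_apply_univ, Real.volume_Ioc]; norm_num
    have hAeq : (∫ t in x..(x+δ), ‖deriv v t‖) = ∫ t, ‖deriv v t‖ * 1 ∂μx := by
      rw [intervalIntegral.integral_of_le hle]; simp [hμx]
    have hInt2 : Integrable (fun t => ‖deriv v t‖ ^ 2) μx := hhc.integrableOn_Ioc
    have hInt1 : Integrable (fun _ : ℝ => (1:ℝ) ^ 2) μx := by
      refine integrableOn_const (lt_top_iff_ne_top.mp ?_)
      rw [Real.volume_Ioc]; exact ENNReal.ofReal_lt_top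
    have hcs := cs_real (hv'.norm.aestronglyMeasurable.restrict)
      aestronglyMeasurable_const (fun t => norm_nonneg _) (fun _ => zero_le_one) hInt2 hInt1
    have hone : (∫ _ : ℝ, (1:ℝ) ^ 2 ∂μx) = δ := by
      simp [integral_const, measureReal_def, hμx_fin, ENNReal.toReal_ofReal hδ.le]
    have hA : (∫ t in x..(x+δ), ‖deriv v t‖) ≤
        Real.sqrt (∫ t, h t ∂μx) * Real.sqrt δ := by
      rw [hAeq]; rw [hone] at hcs; exact hcs
    have hAnn : 0 ≤ ∫ t in x..(x+δ), ‖deriv v t‖ :=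
      intervalIntegral.integral_nonneg hle (fun t _ => norm_nonneg _)
    have hInn : 0 ≤ ∫ t, h t ∂μx := integral_nonneg (fun t => by positivity)
    have hsq : ‖Dquot δ v x‖ ^ 2 ≤ (δ⁻¹ * (Real.sqrt (∫ t, h t ∂μx) * Real.sqrt δ)) ^ 2 := by
      apply pow_le_pow_left₀ (norm_nonneg _)
      exact hDq.trans (mul_le_mul_of_nonneg_left hA (inv_pos.mpr hδ).le)
    refine hsq.trans ?_
    have : (δ⁻¹ * (Real.sqrt (∫ t, h t ∂μx) * Real.sqrt δ)) ^ 2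
        = δ⁻¹ ^ 2 * ((∫ t, h t ∂μx) * δ) := by
      rw [mul_pow, mul_pow, Real.sq_sqrt hInn, Real.sq_sqrt hδ.le]
    have hIoc : (∫ t, h t ∂μx) = ∫ s in Set.Ioc 0 δ, h (x + s) := by
      rw [hμx, ← intervalIntegral.integral_of_le hle,
        show (∫ s in Set.Ioc 0 δ, h (x + s)) = ∫ s in (0:ℝ)..δ, h (x + s) from
          (intervalIntegral.integral_of_le hδ.le).symm,
        intervalIntegral.integral_comp_add_left h x]
      norm_num
    rw [this, hIoc]
    have hrw : δ⁻¹ ^ 2 * ((∫ s in Set.Ioc 0 δ, h (x + s)) * δ) =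
        δ⁻¹ * (∫ s in Set.Ioc 0 δ, h (x + s)) * (δ⁻¹ * δ) := by ring
    rw [hrw, inv_mul_cancel₀ hδ.ne', mul_one]
  -- pass to lintegrals
  have hnn : ∀ x, (0:ℝ) ≤ ‖Dquot δ v x‖ ^ 2 := fun x => by positivity
  have hofh : ENNReal.ofReal (∫ t, h t) = ∫⁻ t, ENNReal.ofReal (h t) :=
    MeasureTheory.ofReal_integral_eq_lintegral_ofReal h1
      (Filter.Eventually.of_forall fun t => by positivity)
  have hmono : ∫⁻ x, ENNReal.ofReal (‖Dquot δ v x‖ ^ 2) ≤ ∫⁻ t, ENNReal.ofReal (h t) := by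
    calc ∫⁻ x, ENNReal.ofReal (‖Dquot δ v x‖ ^ 2)
        ≤ ∫⁻ x, ENNReal.ofReal δ⁻¹ * ∫⁻ s in Set.Ioc 0 δ, ENNReal.ofReal (h (x + s)) := by
          apply lintegral_mono
          intro x
          calc ENNReal.ofReal (‖Dquot δ v x‖ ^ 2)
              ≤ ENNReal.ofReal (δ⁻¹ * ∫ s in Set.Ioc 0 δ, h (x + s)) :=
                ENNReal.ofReal_le_ofReal (key x)
            _ = ENNReal.ofReal δ⁻¹ * ∫⁻ s in Set.Ioc 0 δ, ENNReal.ofReal (h (x + s)) := by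
                rw [ENNReal.ofReal_mul (by positivity)]
                congr 1
                exact MeasureTheory.ofReal_integral_eq_lintegral_ofReal
                  ((hhc.comp (continuous_const.add continuous_id)).integrableOn_Ioc)
                  (Filter.Eventually.of_forall fun s => by positivity)
      _ = ENNReal.ofReal δ⁻¹ * ∫⁻ x, ∫⁻ s in Set.Ioc 0 δ, ENNReal.ofReal (h (x + s)) :=
          lintegral_const_mul' _ _ ENNReal.ofReal_ne_top
      _ = ENNReal.ofReal δ⁻¹ * ∫⁻ s in Set.Ioc 0 δ, ∫⁻ x, ENNReal.ofReal (h (x + s)) := by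
          rw [lintegral_lintegral_swap]
          exact (ENNReal.measurable_ofReal.comp
            ((hhc.comp continuous_add).measurable)).aemeasurable
      _ = ENNReal.ofReal δ⁻¹ * ∫⁻ _ in Set.Ioc 0 δ, ∫⁻ t, ENNReal.ofReal (h t) := by
          congr 1
          apply lintegral_congr_ae
          refine Filter.Eventually.of_forall fun s => ?_
          exact lintegral_add_right_eq_self (fun t => ENNReal.ofReal (h t)) s
      _ = ENNReal.ofReal δ⁻¹ * ((∫⁻ t, ENNReal.ofReal (h t)) * ENNReal.ofReal δ) := by
          rw [setLIntegral_const, Real.volume_Ioc, sub_zero]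
      _ = ∫⁻ t, ENNReal.ofReal (h t) := by
          rw [← mul_assoc, mul_comm (ENNReal.ofReal δ⁻¹), mul_assoc,
            ← ENNReal.ofReal_mul (inv_pos.mpr hδ).le, inv_mul_cancel₀ hδ.ne',
            ENNReal.ofReal_one, mul_one]
  have hL : ∫ x, ‖Dquot δ v x‖ ^ 2 = (∫⁻ x, ENNReal.ofReal (‖Dquot δ v x‖ ^ 2)).toReal :=
    integral_eq_lintegral_of_nonneg_ae (Filter.Eventually.of_forall hnn)
      hDqc.aestronglyMeasurable
  rw [hL]
  have hfin : ∫⁻ t, ENNReal.ofReal (h t) ≠ ⊤ := by rw [← hofh]; exact ENNReal.ofReal_ne_top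
  have := ENNReal.toReal_mono hfin hmono
  rwa [← hofh, ENNReal.toReal_ofReal (integral_nonneg fun t => by positivity)] at this

lemma riemann_bound {δ : ℝ} (hδ : 0 < δ) {v : ℝ → C2} (hv : ContDiff ℝ 1 v)
    (h0 : Integrable (fun x => ‖v x‖ ^ 2)) (h1 : Integrable (fun x => ‖deriv v x‖ ^ 2)) :
    δ * ∑' n : ℤ, ‖v (δ * n)‖ ^ 2 ≤ (∫ x : ℝ, ‖v x‖ ^ 2)
      + 2 * δ * Real.sqrt (∫ x : ℝ, ‖v x‖ ^ 2) * Real.sqrt (∫ x : ℝ, ‖deriv v x‖ ^ 2) := by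
  have hvd : Differentiable ℝ v := hv.differentiable one_ne_zero
  have hvc : Continuous v := hv.continuous
  have hv'c : Continuous (deriv v) := (contDiff_one_iff_deriv.mp hv).2
  set g : ℝ → ℝ := fun x => 2 * RCLike.re ⟪v x, deriv v x⟫ with hg_def
  have hgc : Continuous g := by
    apply continuous_const.mul
    exact (RCLike.continuous_re).comp (continuous_inner.comp (hvc.prodMk hv'c))
  set ψ : ℝ → ℝ := fun x => 2 * (‖v x‖ * ‖deriv v x‖) with hψ_def
  have hψc : Continuous ψ := continuous_const.mul (hvc.norm.mul hv'c.norm)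
  have hgψ : ∀ x, |g x| ≤ ψ x := by
    intro x
    rw [hg_def, hψ_def]
    simp only [abs_mul, Nat.abs_ofNat]
    refine mul_le_mul_of_nonneg_left ?_ (by norm_num)
    exact (RCLike.abs_re_le_norm _).trans (norm_inner_le_norm _ _)
  have hψint : Integrable ψ := by
    refine (h0.add h1).mono' hψc.aestronglyMeasurable ?_
    refine Filter.Eventually.of_forall fun x => ?_
    rw [Real.norm_eq_abs, abs_of_nonneg (by positivity)]
    simp only [Pi.add_apply, hψ_def]
    nlinarith [sq_nonneg (‖v x‖ - ‖deriv v x‖)]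
  -- intervals
  set s : ℤ → Set ℝ := fun n => Set.Ioc (δ * n) (δ * (n + 1)) with hs_def
  have hsm : ∀ n, MeasurableSet (s n) := fun n => measurableSet_Ioc
  have hmono : ∀ n : ℤ, δ * n ≤ δ * (n + 1) := fun n => by
    have : (n:ℝ) ≤ n + 1 := by linarith
    nlinarith
  have hdisj : Pairwise (Function.onFun Disjoint s) := by
    intro m n hmn
    apply Set.Ioc_disjoint_Ioc.mpr
    rcases lt_or_gt_of_ne hmn with h | h
    · have : (m:ℝ) + 1 ≤ n := by exact_mod_cast h
      refine le_trans (min_le_left _ _) (le_trans ?_ (le_max_right _ _))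
      nlinarith
    · have : (n:ℝ) + 1 ≤ m := by exact_mod_cast h
      refine le_trans (min_le_right _ _) (le_trans ?_ (le_max_left _ _))
      nlinarith
  have hunion : (⋃ n, s n) = Set.univ := by
    ext x
    simp only [Set.mem_iUnion, Set.mem_univ, iff_true, hs_def, Set.mem_Ioc]
    refine ⟨⌈x / δ⌉ - 1, ?_, ?_⟩
    · push_cast
      have : (⌈x / δ⌉ : ℝ) - 1 < x / δ := by
        have := Int.ceil_lt_add_one (x / δ); linarith
      calc δ * ((⌈x / δ⌉ : ℝ) - 1) < δ * (x / δ) := by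
            exact mul_lt_mul_of_pos_left this hδ
        _ = x := by field_simp
    · push_cast
      have : x / δ ≤ (⌈x / δ⌉ : ℝ) := Int.le_ceil _
      calc x = δ * (x / δ) := by field_simp
        _ ≤ δ * ((⌈x / δ⌉ : ℝ) - 1 + 1) := by
            rw [sub_add_cancel]; exact mul_le_mul_of_nonneg_left this hδ.le
  -- pointwise inequality on each interval
  have key : ∀ n : ℤ, ∀ x ∈ s n, ‖v (δ * n)‖ ^ 2 ≤
      ‖v x‖ ^ 2 + ∫ t in (δ * n)..(δ * (n+1)), ψ t := by
    intro n x hx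
    obtain ⟨hx1, hx2⟩ := hx
    have hax : δ * n ≤ x := hx1.le
    have ftc : ∫ t in (δ * n)..x, g t = ‖v x‖ ^ 2 - ‖v (δ * n)‖ ^ 2 :=
      intervalIntegral.integral_eq_sub_of_hasDerivAt
        (fun t _ => hasDerivAt_normSq hvd t) (hgc.intervalIntegrable _ _)
    have habs : |∫ t in (δ * n)..x, g t| ≤ ∫ t in (δ * n)..(δ * (n+1)), ψ t := by
      calc |∫ t in (δ * n)..x, g t| ≤ ∫ t in (δ * n)..x, |g t| :=
            intervalIntegral.abs_integral_le_integral_abs hax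
        _ ≤ ∫ t in (δ * n)..x, ψ t := by
            apply intervalIntegral.integral_mono_on hax
              (hgc.abs.intervalIntegrable _ _) (hψc.intervalIntegrable _ _)
            exact fun t _ => hgψ t
        _ ≤ ∫ t in (δ * n)..(δ * (n+1)), ψ t := by
            apply intervalIntegral.integral_mono_interval le_rfl hax hx2
            · refine Filter.Eventually.of_forall fun t => by positivity
            · exact hψc.intervalIntegrable _ _
    nlinarith [abs_nonneg (∫ t in (δ * n)..x, g t), le_abs_self (∫ t in (δ * n)..x, g t),
      neg_abs_le (∫ t in (δ * n)..x, g t)]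
  -- integrate over each interval
  have hvol : ∀ n : ℤ, (volume (s n)).toReal = δ := by
    intro n
    rw [hs_def]
    simp only [Real.volume_Ioc]
    rw [ENNReal.toReal_ofReal (by nlinarith [hmono n])]
    ring_nf
  have step2 : ∀ n : ℤ, δ * ‖v (δ * n)‖ ^ 2 ≤
      (∫ x in s n, ‖v x‖ ^ 2) + δ * ∫ t in (δ * n)..(δ * (n+1)), ψ t := by
    intro n
    have hC : δ * ‖v (δ * n)‖ ^ 2 = ∫ _ in s n, ‖v (δ * n)‖ ^ 2 := by
      rw [setIntegral_const, measureReal_def, hvol n, smul_eq_mul]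
    rw [hC]
    have hint1 : IntegrableOn (fun x => ‖v x‖ ^ 2 + ∫ t in (δ * n)..(δ * (n+1)), ψ t) (s n) :=
      h0.integrableOn.add (integrableOn_const (lt_top_iff_ne_top.mp (by
        rw [hs_def]; exact measure_Ioc_lt_top)))
    calc (∫ _ in s n, ‖v (δ * n)‖ ^ 2)
        ≤ ∫ x in s n, (‖v x‖ ^ 2 + ∫ t in (δ * n)..(δ * (n+1)), ψ t) := by
          apply setIntegral_mono_on (integrableOn_const (lt_top_iff_ne_top.mp (by
            rw [hs_def]; exact measure_Ioc_lt_top))) hint1 (hsm n)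
          exact key n
      _ = (∫ x in s n, ‖v x‖ ^ 2) + δ * ∫ t in (δ * n)..(δ * (n+1)), ψ t := by
          rw [integral_add h0.integrableOn (integrableOn_const (lt_top_iff_ne_top.mp (by
            rw [hs_def]; exact measure_Ioc_lt_top)))]
          congr 1
          rw [setIntegral_const, measureReal_def, hvol n, smul_eq_mul]
  -- summation
  have hsumA : HasSum (fun n : ℤ => ∫ x in s n, ‖v x‖ ^ 2) (∫ x : ℝ, ‖v x‖ ^ 2) := by
    have := hasSum_integral_iUnion hsm hdisj (by rw [hunion]; exact h0.integrableOn)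
    rwa [hunion, Measure.restrict_univ] at this
  have hsumB : HasSum (fun n : ℤ => ∫ t in s n, ψ t) (∫ t : ℝ, ψ t) := by
    have := hasSum_integral_iUnion hsm hdisj (by rw [hunion]; exact hψint.integrableOn)
    rwa [hunion, Measure.restrict_univ] at this
  have hBeq : ∀ n : ℤ, (∫ t in (δ * n)..(δ * (n+1)), ψ t) = ∫ t in s n, ψ t := fun n =>
    intervalIntegral.integral_of_le (hmono n)
  have hsumRHS : HasSum (fun n : ℤ => (∫ x in s n, ‖v x‖ ^ 2) +
      δ * ∫ t in (δ * n)..(δ * (n+1)), ψ t)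
      ((∫ x : ℝ, ‖v x‖ ^ 2) + δ * ∫ t : ℝ, ψ t) := by
    refine hsumA.add ?_
    simp_rw [hBeq]
    exact hsumB.mul_left δ
  have hsummLHS : Summable (fun n : ℤ => δ * ‖v (δ * n)‖ ^ 2) := by
    refine Summable.of_nonneg_of_le (fun n => by positivity) (fun n => step2 n) hsumRHS.summable
  have htsum : δ * ∑' n : ℤ, ‖v (δ * n)‖ ^ 2 ≤ (∫ x : ℝ, ‖v x‖ ^ 2) + δ * ∫ t : ℝ, ψ t := by
    rw [← tsum_mul_left]
    rw [← hsumRHS.tsum_eq]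
    exact Summable.tsum_le_tsum step2 hsummLHS hsumRHS.summable
  refine htsum.trans ?_
  -- Cauchy-Schwarz
  have hcs : ∫ t : ℝ, ψ t ≤ 2 * (Real.sqrt (∫ x : ℝ, ‖v x‖ ^ 2) *
      Real.sqrt (∫ x : ℝ, ‖deriv v x‖ ^ 2)) := by
    have : ∫ t : ℝ, ψ t = 2 * ∫ t : ℝ, ‖v t‖ * ‖deriv v t‖ := by
      rw [hψ_def, integral_const_mul]
    rw [this]
    refine mul_le_mul_of_nonneg_left ?_ (by norm_num)
    exact cs_real hvc.norm.aestronglyMeasurable hv'c.norm.aestronglyMeasurable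
      (fun x => norm_nonneg _) (fun x => norm_nonneg _) h0 h1
  nlinarith [hδ]

lemma integrable_sq_Dquot_iter {δ : ℝ} {u : ℝ → C2} (hc : Continuous u)
    (h : Integrable (fun x => ‖u x‖ ^ 2)) (k : ℕ) :
    Integrable (fun x => ‖(Dquot δ)^[k] u x‖ ^ 2) := by
  induction k with
  | zero => exact h
  | succ k ih =>
      rw [show (Dquot δ)^[k+1] u = Dquot δ ((Dquot δ)^[k] u) from
        Function.iterate_succ_apply' _ _ _]
      refine integrable_sq_Dquot ?_ ih
      have := contDiff_Dquot_iter (contDiff_zero.mpr hc) δ k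
      exact contDiff_zero.mp this

lemma integral_sq_Dquot_iter_le {δ : ℝ} (hδ : 0 < δ) (k : ℕ) :
    ∀ w : ℝ → C2, ContDiff ℝ k w →
    (∀ i ≤ k, Integrable (fun x => ‖iteratedDeriv i w x‖ ^ 2)) →
    ∫ x : ℝ, ‖(Dquot δ)^[k] w x‖ ^ 2 ≤ ∫ x : ℝ, ‖iteratedDeriv k w x‖ ^ 2 := by
  induction k with
  | zero =>
      intro w _ _
      simp [iteratedDeriv_zero]
  | succ k ih =>
      intro w hw hint
      have hw1 : ContDiff ℝ 1 w := hw.of_le (by exact_mod_cast Nat.one_le_iff_ne_zero.mpr (by omega))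
      have hw' : ContDiff ℝ k (deriv w) := by
        have : ContDiff ℝ ((k : WithTop ℕ∞) + 1) w := by exact_mod_cast hw
        exact (contDiff_succ_iff_deriv.mp this).2.2
      have hDk : ContDiff ℝ 1 ((Dquot δ)^[k] w) := contDiff_Dquot_iter hw1 δ k
      have hcomm : deriv ((Dquot δ)^[k] w) = (Dquot δ)^[k] (deriv w) := deriv_Dquot_iter hw1 δ k
      have hw'c : Continuous (deriv w) := (contDiff_one_iff_deriv.mp hw1).2
      have hintw' : Integrable (fun x => ‖deriv w x‖ ^ 2) := by
        have := hint 1 (by omega); rwa [iteratedDeriv_one] at this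
      have hint' : Integrable (fun x => ‖deriv ((Dquot δ)^[k] w) x‖ ^ 2) := by
        rw [hcomm]; exact integrable_sq_Dquot_iter hw'c hintw' k
      calc ∫ x : ℝ, ‖(Dquot δ)^[k+1] w x‖ ^ 2
          = ∫ x : ℝ, ‖Dquot δ ((Dquot δ)^[k] w) x‖ ^ 2 := by
            rw [show (Dquot δ)^[k+1] w = Dquot δ ((Dquot δ)^[k] w) from
              Function.iterate_succ_apply' _ _ _]
        _ ≤ ∫ x : ℝ, ‖deriv ((Dquot δ)^[k] w) x‖ ^ 2 := integral_sq_Dquot_le hδ hDk hint'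
        _ = ∫ x : ℝ, ‖(Dquot δ)^[k] (deriv w) x‖ ^ 2 := by rw [hcomm]
        _ ≤ ∫ x : ℝ, ‖iteratedDeriv k (deriv w) x‖ ^ 2 := by
            refine ih (deriv w) hw' fun i hi => ?_
            have := hint (i+1) (by omega)
            rwa [iteratedDeriv_succ'] at this
        _ = ∫ x : ℝ, ‖iteratedDeriv (k+1) w x‖ ^ 2 := by rw [← iteratedDeriv_succ']

/-- For `u ∈ H^{s+1}(ℝ,ℂ²)`, `0 ≤ j ≤ s` and `δ > 0`, the iterated difference quotient
satisfies `δ ∑_{x ∈ δℤ} ‖D_δ^j u(x)‖² ≤ ‖∂_x^j u‖²_{L²} + 2δ ‖∂_x^j u‖_{L²} ‖∂_x^{j+1} u‖_{L²}`. -/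
theorem latticeSum_iteratedDifference_le (s : ℕ) (j : ℕ) (hj : j ≤ s)
    (δ : ℝ) (hδ : 0 < δ) (u : ℝ → C2) (hu : InH (s + 1) u) :
    δ * ∑' n : ℤ, ‖(Dquot δ)^[j] u (δ * n)‖ ^ 2 ≤
      (∫ x : ℝ, ‖iteratedDeriv j u x‖ ^ 2) +
        2 * δ * L2Norm (iteratedDeriv j u) * L2Norm (iteratedDeriv (j + 1) u) := by
  obtain ⟨hsm, hint⟩ := hu
  have hu1 : ContDiff ℝ 1 u := hsm.of_le (by exact_mod_cast Nat.one_le_iff_ne_zero.mpr (by omega))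
  have huj1 : ContDiff ℝ (j + 1 : ℕ) u := hsm.of_le (by exact_mod_cast (by omega : j + 1 ≤ s + 1))
  have hderivC : ContDiff ℝ (j : ℕ) (deriv u) := by
    have : ContDiff ℝ ((j : WithTop ℕ∞) + 1) u := by exact_mod_cast huj1
    exact (contDiff_succ_iff_deriv.mp this).2.2
  set v : ℝ → C2 := (Dquot δ)^[j] u with hv_def
  have hvC1 : ContDiff ℝ 1 v := contDiff_Dquot_iter hu1 δ j
  have hu0int : Integrable (fun x => ‖u x‖ ^ 2) := by
    have := hint 0 (by omega); rwa [iteratedDeriv_zero] at this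
  have hu1int : Integrable (fun x => ‖deriv u x‖ ^ 2) := by
    have := hint 1 (by omega); rwa [iteratedDeriv_one] at this
  have hv0 : Integrable (fun x => ‖v x‖ ^ 2) :=
    integrable_sq_Dquot_iter hu1.continuous hu0int j
  have hcomm : deriv v = (Dquot δ)^[j] (deriv u) := deriv_Dquot_iter hu1 δ j
  have hu'c : Continuous (deriv u) := (contDiff_one_iff_deriv.mp hu1).2
  have hv1 : Integrable (fun x => ‖deriv v x‖ ^ 2) := by
    rw [hcomm]; exact integrable_sq_Dquot_iter hu'c hu1int j
  have base := riemann_bound hδ hvC1 hv0 hv1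
  have hkey0 : ∫ x : ℝ, ‖v x‖ ^ 2 ≤ ∫ x : ℝ, ‖iteratedDeriv j u x‖ ^ 2 :=
    integral_sq_Dquot_iter_le hδ j u (hsm.of_le (by exact_mod_cast (by omega : j ≤ s + 1)))
      (fun i hi => hint i (by omega))
  have hkey1 : ∫ x : ℝ, ‖deriv v x‖ ^ 2 ≤ ∫ x : ℝ, ‖iteratedDeriv (j + 1) u x‖ ^ 2 := by
    rw [hcomm]
    calc ∫ x : ℝ, ‖(Dquot δ)^[j] (deriv u) x‖ ^ 2
        ≤ ∫ x : ℝ, ‖iteratedDeriv j (deriv u) x‖ ^ 2 := by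
          refine integral_sq_Dquot_iter_le hδ j (deriv u) hderivC fun i hi => ?_
          have := hint (i+1) (by omega)
          rwa [iteratedDeriv_succ'] at this
      _ = ∫ x : ℝ, ‖iteratedDeriv (j + 1) u x‖ ^ 2 := by rw [← iteratedDeriv_succ']
  refine base.trans ?_
  rw [L2Norm, L2Norm]
  have h1 : Real.sqrt (∫ x : ℝ, ‖v x‖ ^ 2) ≤ Real.sqrt (∫ x : ℝ, ‖iteratedDeriv j u x‖ ^ 2) :=
    Real.sqrt_le_sqrt hkey0
  have h2 : Real.sqrt (∫ x : ℝ, ‖deriv v x‖ ^ 2) ≤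
      Real.sqrt (∫ x : ℝ, ‖iteratedDeriv (j + 1) u x‖ ^ 2) :=
    Real.sqrt_le_sqrt hkey1
  have s1 : (0:ℝ) ≤ Real.sqrt (∫ x : ℝ, ‖v x‖ ^ 2) := Real.sqrt_nonneg _
  have s2 : (0:ℝ) ≤ Real.sqrt (∫ x : ℝ, ‖deriv v x‖ ^ 2) := Real.sqrt_nonneg _
  have s3 : (0:ℝ) ≤ Real.sqrt (∫ x : ℝ, ‖iteratedDeriv j u x‖ ^ 2) := Real.sqrt_nonneg _
  have s4 : (0:ℝ) ≤ Real.sqrt (∫ x : ℝ, ‖iteratedDeriv (j+1) u x‖ ^ 2) := Real.sqrt_nonneg _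
  have hmul : 2 * δ * Real.sqrt (∫ x : ℝ, ‖v x‖ ^ 2) * Real.sqrt (∫ x : ℝ, ‖deriv v x‖ ^ 2) ≤
      2 * δ * Real.sqrt (∫ x : ℝ, ‖iteratedDeriv j u x‖ ^ 2) *
        Real.sqrt (∫ x : ℝ, ‖iteratedDeriv (j + 1) u x‖ ^ 2) := by
    have := mul_le_mul (mul_le_mul_of_nonneg_left h1 (by positivity : (0:ℝ) ≤ 2 * δ)) h2 s2
      (by positivity)
    linarith
  linarith
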